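/- Fix γ > 0. There exist measurable functions f₊, f₋, h₊, h₋ : (0,∞) → [0,∞) such that for almost every r > 0: B^{1/3}·g_{B,+}(r) ≤ f₊(r) and B^{1/3}·g_{B,−}(r) ≤ f₋(r) for all B > 1, and g_{B,+}(r) ≤ h₊(r) and g_{B,−}(r) ≤ h₋(r) for all B ∈ (0,1); moreover ∫_0^1 r²·f_±(r) dr < ∞, ∫_1^∞ f_±(r) dr < ∞, ∫_0^1 r²·h_±(r) dr < ∞ and ∫_1^∞ h_±(r) dr < ∞ for both signs. -/

import Mathlib

open Filter Topology MeasureTheory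

noncomputable def sB (B t : ℝ) : ℝ := Real.sqrt (t ^ 2 + B ^ 2 / 4)
noncomputable def wB (B ε t : ℝ) : ℝ := (1 / 2 + ε * B / (4 * sB B t)) * t ^ 2
noncomputable def FB (B ε y : ℝ) : ℝ := (2 * sB B y + ε * B) * y

lemma sB_pos {B : ℝ} (hB : 0 < B) (t : ℝ) : 0 < sB B t :=
  Real.sqrt_pos.2 (by positivity)

lemma sB_sq {B : ℝ} (hB : 0 < B) (t : ℝ) : sB B t ^ 2 = t ^ 2 + B ^ 2 / 4 :=
  Real.sq_sqrt (by positivity)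

lemma le_sB {B : ℝ} (hB : 0 < B) {t : ℝ} (ht : 0 ≤ t) : t ≤ sB B t :=
  (Real.le_sqrt ht (by positivity)).2 (by nlinarith)

lemma half_le_sB {B : ℝ} (hB : 0 < B) (t : ℝ) : B / 2 ≤ sB B t :=
  (Real.le_sqrt (by positivity) (by positivity)).2 (by nlinarith)

lemma sB_le {B : ℝ} (hB : 0 < B) {t : ℝ} (ht : 0 ≤ t) : sB B t ≤ t + B / 2 := by
  rw [sB, show t ^ 2 + B ^ 2 / 4 = (t + B/2)^2 - t*B by ring]
  calc Real.sqrt ((t + B/2)^2 - t*B) ≤ Real.sqrt ((t + B/2)^2) :=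
        Real.sqrt_le_sqrt (by nlinarith)
    _ = t + B/2 := Real.sqrt_sq (by positivity)

lemma continuous_sB (B : ℝ) : Continuous (sB B) :=
  Real.continuous_sqrt.comp (by continuity)

lemma A_pos {B ε : ℝ} (hB : 0 < B) (hε : ε = 1 ∨ ε = -1) {t : ℝ} (ht : t ≠ 0) :
    0 < 2 * sB B t + ε * B := by
  have h1 : B / 2 < sB B t := by
    have h2 := sB_sq hB t
    have h3 := sB_pos hB t
    have h4 : 0 < t ^ 2 := by positivity
    nlinarith
  rcases hε with h | h <;> subst h <;> nlinarith

lemma hasDerivAt_sB {B : ℝ} (hB : 0 < B) (t : ℝ) :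
    HasDerivAt (sB B) (t / sB B t) t := by
  have h1 : HasDerivAt (fun y : ℝ => y ^ 2 + B ^ 2 / 4) (2 * t) t := by
    simpa using (hasDerivAt_pow 2 t).add_const (B ^ 2 / 4)
  have h2 := h1.sqrt (by positivity)
  have hs := sB_pos hB t
  convert h2 using 1
  · rfl
  rw [show Real.sqrt (t ^ 2 + B ^ 2 / 4) = sB B t from rfl]
  field_simp

lemma hasDerivAt_FB {B ε : ℝ} (hB : 0 < B) (t : ℝ) :
    HasDerivAt (FB B ε) (2 * sB B t + ε * B + 2 * t ^ 2 / sB B t) t := by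
  have h1 := (((hasDerivAt_sB hB t).const_mul 2).add_const (ε * B)).mul (hasDerivAt_id' (x := t))
  have hs := sB_pos hB t
  convert h1 using 1
  · rfl
  · rfl
  · rfl
  field_simp
  ring

lemma continuous_FB (B ε : ℝ) : Continuous (FB B ε) :=
  ((continuous_const.mul (continuous_sB B)).add continuous_const).mul continuous_id

lemma FB_zero (B ε : ℝ) : FB B ε 0 = 0 := by simp [FB]

lemma FB_strictMono {B ε : ℝ} (hB : 0 < B) (hε : ε = 1 ∨ ε = -1) :
    StrictMono (FB B ε) := by
  have hderiv : ∀ t : ℝ, t ≠ 0 → 0 < deriv (FB B ε) t := by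
    intro t ht
    rw [(hasDerivAt_FB hB t).deriv]
    have hA := A_pos hB hε ht
    have hs := sB_pos hB t
    have h2 : 0 < 2 * t ^ 2 / sB B t := by positivity
    linarith
  have h1 : StrictMonoOn (FB B ε) (Set.Ici 0) := by
    apply strictMonoOn_of_deriv_pos (convex_Ici 0) (continuous_FB B ε).continuousOn
    intro t ht
    rw [interior_Ici] at ht
    exact hderiv t (ne_of_gt ht)
  have h2 : StrictMonoOn (FB B ε) (Set.Iic 0) := by
    apply strictMonoOn_of_deriv_pos (convex_Iic 0) (continuous_FB B ε).continuousOn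
    intro t ht
    rw [interior_Iic] at ht
    exact hderiv t (ne_of_lt ht)
  intro a b hab
  rcases le_or_gt 0 a with ha | ha
  · exact h1 ha (le_trans ha hab.le) hab
  · rcases le_or_gt b 0 with hb | hb
    · exact h2 ha.le hb hab
    · calc FB B ε a < FB B ε 0 := h2 ha.le Set.self_mem_Iic ha
        _ < FB B ε b := h1 Set.self_mem_Ici hb.le hb

lemma FB_surj {B ε : ℝ} (hB : 0 < B) (hε : ε = 1 ∨ ε = -1) :
    Function.Surjective (FB B ε) := by
  apply Continuous.surjective (continuous_FB B ε)
  · apply tendsto_atTop_mono' atTop _ tendsto_id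
    filter_upwards [eventually_ge_atTop (max B 1)] with y hy
    have hy1 : (1:ℝ) ≤ y := le_trans (le_max_right _ _) hy
    have hyB : B ≤ y := le_trans (le_max_left _ _) hy
    have hsy : y ≤ sB B y := le_sB hB (by linarith)
    have : y * y ≤ FB B ε y := by
      rw [FB]
      rcases hε with h | h <;> subst h <;> nlinarith
    calc id y = y := rfl
      _ ≤ y * y := by nlinarith
      _ ≤ FB B ε y := this
  · apply tendsto_atBot_mono' atBot _ tendsto_id
    filter_upwards [eventually_le_atBot (-(max B 1))] with y hy
    have hy1 : (1:ℝ) ≤ -y := by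
      have := le_max_right B 1; linarith
    have hyB : B ≤ -y := by
      have := le_max_left B 1; linarith
    have hsy : -y ≤ sB B y := by
      have : sB B y = sB B (-y) := by rw [sB, sB]; ring_nf
      rw [this]
      exact le_sB hB (by linarith)
    have hA1 : 1 ≤ 2 * sB B y + ε * B := by
      rcases hε with h | h <;> subst h <;> nlinarith
    show FB B ε y ≤ id y
    rw [FB]
    have hy0 : y ≤ 0 := by linarith
    calc (2 * sB B y + ε * B) * y ≤ 1 * y := mul_le_mul_of_nonpos_right hA1 hy0
      _ = id y := by simp

lemma continuous_wB {B : ℝ} (hB : 0 < B) (ε : ℝ) : Continuous (wB B ε) := by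
  apply Continuous.mul _ (continuous_pow 2)
  apply continuous_const.add
  apply Continuous.div continuous_const (continuous_const.mul (continuous_sB B))
  intro t
  have := sB_pos hB t
  exact mul_ne_zero four_ne_zero this.ne'

lemma derivH {B ε : ℝ} (hB : 0 < B) (hε : ε = 1 ∨ ε = -1) {c : ℝ} (hc : 0 < c)
    (X H : ℝ → ℝ)
    (hXeq : ∀ u : ℝ, 0 < u → FB B ε (X u) = c / u)
    (hHeq : ∀ u : ℝ, 0 < u → H u = (1 / (4 * Real.pi)) * ∫ t in (0:ℝ)..(X u), wB B ε t)
    (r : ℝ) (hr : 0 < r) :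
    0 < X r ∧ deriv H r =
      -(c ^ 2 * X r / (16 * Real.pi * r ^ 3 *
        ((2 * sB B (X r) + ε * B) * sB B (X r) + 2 * X r ^ 2))) := by
  have hmono := FB_strictMono hB hε
  have hsurj := FB_surj hB hε
  set e := StrictMono.orderIsoOfSurjective _ hmono hsurj with he
  have hea : ∀ y, e y = FB B ε y := fun y =>
    congrFun (StrictMono.coe_orderIsoOfSurjective _ hmono hsurj) y
  have hXe : ∀ u : ℝ, 0 < u → X u = e.symm (c / u) := by
    intro u hu
    apply hmono.injective
    rw [hXeq u hu, ← hea, OrderIso.apply_symm_apply]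
  have hx : 0 < X r := by
    have h1 : FB B ε 0 < FB B ε (X r) := by
      rw [FB_zero, hXeq r hr]; positivity
    exact hmono.lt_iff_lt.mp h1
  set x := X r with hx_def
  set s := sB B x with hs_def
  have hs : 0 < s := sB_pos hB x
  have hA := A_pos hB hε hx.ne'
  have hF' : 0 < 2 * s + ε * B + 2 * x ^ 2 / s := by
    have : 0 < 2 * x ^ 2 / s := by positivity
    linarith
  have hFd : HasDerivAt (FB B ε) (2 * s + ε * B + 2 * x ^ 2 / s) x := hasDerivAt_FB hB x
  have hsymm : HasDerivAt (⇑e.symm) (2 * s + ε * B + 2 * x ^ 2 / s)⁻¹ (c / r) := by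
    exact HasDerivAt.of_local_left_inverse (e.symm.continuous.continuousAt)
      (show HasDerivAt (FB B ε) _ (e.symm (c / r)) by
        rw [show e.symm (c / r) = x from (hXe r hr).symm]; exact hFd) hF'.ne'
      (Filter.Eventually.of_forall (fun y => by rw [← hea, OrderIso.apply_symm_apply]))
  have hq : HasDerivAt (fun u : ℝ => c / u) (-(c / r ^ 2)) r := by
    have h1 := (hasDerivAt_inv hr.ne').const_mul c
    simp only [div_eq_mul_inv]
    convert h1 using 1
    · rfl
    · rfl
    ring
  have hXd : HasDerivAt (fun u : ℝ => e.symm (c / u))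
      ((2 * s + ε * B + 2 * x ^ 2 / s)⁻¹ * -(c / r ^ 2)) r := by
    exact HasDerivAt.comp r hsymm hq
  have hwc := continuous_wB hB ε
  have hΦ : HasDerivAt (fun y : ℝ => ∫ t in (0:ℝ)..y, wB B ε t) (wB B ε x) x := by
    apply intervalIntegral.integral_hasDerivAt_right (hwc.intervalIntegrable 0 x)
      hwc.stronglyMeasurable.stronglyMeasurableAtFilter hwc.continuousAt
  have hΦ' : HasDerivAt (fun y : ℝ => ∫ t in (0:ℝ)..y, wB B ε t) (wB B ε x)
      ((fun u : ℝ => e.symm (c / u)) r) := by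
    have h1 : (fun u : ℝ => e.symm (c / u)) r = x := (hXe r hr).symm
    rw [h1]; exact hΦ
  have hcomp := HasDerivAt.comp r hΦ' hXd
  have hH0 : HasDerivAt (fun u : ℝ => (1 / (4 * Real.pi)) * ∫ t in (0:ℝ)..(e.symm (c / u)), wB B ε t)
      ((1 / (4 * Real.pi)) * (wB B ε x * ((2 * s + ε * B + 2 * x ^ 2 / s)⁻¹ * -(c / r ^ 2)))) r := by
    exact (hcomp.const_mul _)
  have hev : H =ᶠ[𝓝 r] (fun u : ℝ => (1 / (4 * Real.pi)) * ∫ t in (0:ℝ)..(e.symm (c / u)), wB B ε t) := by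
    filter_upwards [Ioi_mem_nhds hr] with u hu
    rw [hHeq u hu, hXe u hu]
  refine ⟨hx, ?_⟩
  rw [hev.deriv_eq, hH0.deriv]
  have hcrx : (2 * s + ε * B) * x * r = c := by
    have h1 := hXeq r hr
    rw [FB] at h1
    rw [eq_div_iff hr.ne'] at h1
    exact h1
  have hD : 0 < (2 * s + ε * B) * s + 2 * x ^ 2 := by positivity
  have hπ := Real.pi_pos
  rw [← hcrx]
  rw [show wB B ε x = (1 / 2 + ε * B / (4 * s)) * x ^ 2 from rfl]
  have hF'ne : (2 * s + ε * B + 2 * x ^ 2 / s) ≠ 0 := hF'.ne'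
  have hDne : ((2 * s + ε * B) * s + 2 * x ^ 2) ≠ 0 := hD.ne'
  field_simp
  ring

set_option maxHeartbeats 1000000 in
/-- Common setup facts for the bound lemmas. -/
lemma key_ineqs {B ε c x s r : ℝ} (hB : 0 < B) (hε : ε = 1 ∨ ε = -1) (hc : 0 < c)
    (hx : 0 < x) (hr : 0 < r) (hs : s = Real.sqrt (x ^ 2 + B ^ 2 / 4))
    (hA : (2 * s + ε * B) * x = c / r) :
    0 < (2 * s + ε * B) * s + 2 * x ^ 2 ∧
    c * x ^ 2 ≤ 2 * (r * ((2 * s + ε * B) * s + 2 * x ^ 2) ^ 2) ∧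
    B * c * x ^ 3 ≤ 2 * (r * ((2 * s + ε * B) * s + 2 * x ^ 2) ^ 3) := by
  have hs0 : 0 < s := hs ▸ Real.sqrt_pos.2 (by positivity)
  have hs2 : s ^ 2 = x ^ 2 + B ^ 2 / 4 := hs ▸ Real.sq_sqrt (by positivity)
  have hxs : x ≤ s := by
    rw [hs]; exact (Real.le_sqrt hx.le (by positivity)).2 (by nlinarith)
  have hsle : s ≤ x + B / 2 := by
    rw [hs, show x ^ 2 + B ^ 2 / 4 = (x + B/2)^2 - x*B by ring]
    calc Real.sqrt ((x + B/2)^2 - x*B) ≤ Real.sqrt ((x + B/2)^2) :=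
          Real.sqrt_le_sqrt (by nlinarith)
      _ = x + B/2 := Real.sqrt_sq (by positivity)
  have hBs : B / 2 ≤ s := by
    rw [hs]; exact (Real.le_sqrt (by positivity) (by positivity)).2 (by nlinarith)
  have hcr : (2 * s + ε * B) * x * r = c := by rw [eq_div_iff hr.ne'] at hA; exact hA
  have hApos : 0 < 2 * s + ε * B := by
    rcases hε with h | h <;> subst h <;> nlinarith
  have hD : 0 < (2 * s + ε * B) * s + 2 * x ^ 2 := by positivity
  rcases hε with h | h <;> subst h
  · -- ε = 1
    obtain ⟨D, hD_def⟩ : ∃ D : ℝ, D = (2 * s + 1 * B) * s + 2 * x ^ 2 := ⟨_, rfl⟩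
    rw [← hD_def] at hD ⊢
    have h3 : x * (x + B) ≤ D := by rw [hD_def]; nlinarith
    have h2 : c ≤ 2 * r * (x + B) ^ 2 := by
      rw [← hcr]
      have e1 : (2 * s + 1 * B) * x ≤ (2 * x + 2 * B) * x := by nlinarith
      calc (2 * s + 1 * B) * x * r ≤ ((2 * x + 2 * B) * x) * r :=
            mul_le_mul_of_nonneg_right e1 hr.le
        _ ≤ 2 * r * (x + B) ^ 2 := by
            nlinarith [mul_nonneg (mul_nonneg hB.le hx.le) hr.le,
              mul_nonneg (mul_nonneg hB.le hB.le) hr.le]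
    have h6 : (x * (x + B)) ^ 2 ≤ D ^ 2 := pow_le_pow_left₀ (by positivity) h3 2
    refine ⟨hD, ?_, ?_⟩
    · calc c * x ^ 2 ≤ (2 * r * (x + B) ^ 2) * x ^ 2 :=
            mul_le_mul_of_nonneg_right h2 (by positivity)
        _ = 2 * (r * (x * (x + B)) ^ 2) := by ring
        _ ≤ 2 * (r * D ^ 2) := by nlinarith [mul_le_mul_of_nonneg_left h6 hr.le]
    · have h5 : B * c ≤ 2 * r * (x + B) ^ 3 := by
        have e2 : B * c ≤ B * (2 * r * (x + B) ^ 2) := mul_le_mul_of_nonneg_left h2 hB.le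
        nlinarith [mul_nonneg (mul_nonneg hr.le (sq_nonneg (x + B))) hx.le]
      have h7 : (x * (x + B)) ^ 3 ≤ D ^ 3 := pow_le_pow_left₀ (by positivity) h3 3
      calc B * c * x ^ 3 ≤ (2 * r * (x + B) ^ 3) * x ^ 3 :=
            mul_le_mul_of_nonneg_right h5 (by positivity)
        _ = 2 * (r * (x * (x + B)) ^ 3) := by ring
        _ ≤ 2 * (r * D ^ 3) := by nlinarith [mul_le_mul_of_nonneg_left h7 hr.le]
  · -- ε = -1
    obtain ⟨D, hD_def⟩ : ∃ D : ℝ, D = (2 * s + -1 * B) * s + 2 * x ^ 2 := ⟨_, rfl⟩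
    rw [← hD_def] at hD ⊢
    have h0 : 0 ≤ 2 * s + -1 * B := by nlinarith
    have h1 : 2 * x ^ 2 ≤ D := by rw [hD_def]; nlinarith [mul_nonneg h0 hs0.le]
    have hT : 0 < 2 * s + B := by nlinarith
    have h4 : (2 * s + -1 * B) * (2 * s + B) = 4 * x ^ 2 := by linear_combination 4 * hs2
    refine ⟨hD, ?_, ?_⟩
    · have h2 : c ≤ 2 * x ^ 2 * r := by
        rw [← hcr]
        have e1 : (2 * s + -1 * B) * x ≤ (2 * x) * x := by nlinarith
        calc (2 * s + -1 * B) * x * r ≤ ((2 * x) * x) * r :=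
              mul_le_mul_of_nonneg_right e1 hr.le
          _ = 2 * x ^ 2 * r := by ring
      have h6 : (2 * x ^ 2) ^ 2 ≤ D ^ 2 := pow_le_pow_left₀ (by positivity) h1 2
      calc c * x ^ 2 ≤ (2 * x ^ 2 * r) * x ^ 2 :=
            mul_le_mul_of_nonneg_right h2 (by positivity)
        _ = (1/2) * (r * (2 * x ^ 2) ^ 2) := by ring
        _ ≤ 2 * (r * D ^ 2) := by
            have e3 : r * (2 * x ^ 2) ^ 2 ≤ r * D ^ 2 := mul_le_mul_of_nonneg_left h6 hr.le
            have e4 : (0:ℝ) ≤ r * D ^ 2 := mul_nonneg hr.le (sq_nonneg D)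
            linarith
    · have hcT : c * (2 * s + B) = 4 * x ^ 3 * r := by
        linear_combination (-(2 * s + B)) * hcr + x * r * h4
      have h4s : s * ((2 * s + -1 * B) * (2 * s + B)) = s * (4 * x ^ 2) := by rw [h4]
      have hDT : 2 * B * x ^ 2 ≤ D * (2 * s + B) := by
        nlinarith [h4s, mul_nonneg (sq_nonneg x) (show (0:ℝ) ≤ s - B/2 by linarith),
          mul_nonneg (mul_nonneg hx.le hx.le) hT.le]
      rw [← mul_le_mul_iff_of_pos_right hT]
      calc B * c * x ^ 3 * (2 * s + B) = B * x ^ 3 * (c * (2 * s + B)) := by ring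
        _ = 4 * B * x ^ 6 * r := by rw [hcT]; ring
        _ ≤ 2 * r * ((2 * x ^ 2) * (2 * x ^ 2)) * (2 * B * x ^ 2) := by
            nlinarith [mul_nonneg (mul_nonneg hB.le hr.le) (pow_nonneg hx.le 6)]
        _ ≤ 2 * r * (D * D) * (D * (2 * s + B)) := by
            apply mul_le_mul _ hDT (by positivity) (by positivity)
            exact mul_le_mul_of_nonneg_left (mul_le_mul h1 h1 (by positivity) hD.le)
              (by positivity)
        _ = 2 * (r * D ^ 3) * (2 * s + B) := by ring

set_option maxHeartbeats 1000000 in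
lemma bound_hp {B ε c x s r : ℝ} (hB : 0 < B) (hε : ε = 1 ∨ ε = -1) (hc : 0 < c)
    (hx : 0 < x) (hr : 0 < r) (hs : s = Real.sqrt (x ^ 2 + B ^ 2 / 4))
    (hA : (2 * s + ε * B) * x = c / r) :
    c ^ 2 * x / (16 * Real.pi * r ^ 3 * ((2 * s + ε * B) * s + 2 * x ^ 2)) ≤
      (c * Real.sqrt c + 1) / (r ^ 2 * Real.sqrt r) := by
  obtain ⟨hD, hK1, -⟩ := key_ineqs hB hε hc hx hr hs hA
  obtain ⟨D, hD_def⟩ : ∃ D : ℝ, D = (2 * s + ε * B) * s + 2 * x ^ 2 := ⟨_, rfl⟩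
  rw [← hD_def] at hD hK1 ⊢
  have hπ := Real.pi_gt_three
  have hsr : 0 < Real.sqrt r := Real.sqrt_pos.2 hr
  have hsc : 0 ≤ Real.sqrt c := Real.sqrt_nonneg c
  have hsr2 : Real.sqrt r ^ 2 = r := Real.sq_sqrt hr.le
  have hsc2 : Real.sqrt c ^ 2 = c := Real.sq_sqrt hc.le
  apply le_of_pow_le_pow_left₀ (n := 2) two_ne_zero (by positivity)
  rw [div_pow, div_pow, div_le_div_iff₀ (by positivity) (by positivity)]
  have hc3 : (c * Real.sqrt c) ^ 2 = c ^ 3 := by rw [mul_pow, hsc2]; ring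
  have hCh : c ^ 3 ≤ (c * Real.sqrt c + 1) ^ 2 := by
    nlinarith [mul_nonneg hc.le hsc]
  have h5 : (r ^ 2 * Real.sqrt r) ^ 2 = r ^ 5 := by rw [mul_pow, hsr2]; ring
  calc (c ^ 2 * x) ^ 2 * (r ^ 2 * Real.sqrt r) ^ 2
      = (c ^ 3 * r ^ 5) * (c * x ^ 2) := by
        rw [h5]; ring
    _ ≤ (c ^ 3 * r ^ 5) * (2 * (r * D ^ 2)) :=
        mul_le_mul_of_nonneg_left hK1 (by positivity)
    _ = 2 * c ^ 3 * (r ^ 6 * D ^ 2) := by ring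
    _ ≤ 2 * (c * Real.sqrt c + 1) ^ 2 * (r ^ 6 * D ^ 2) := by
        have := mul_le_mul_of_nonneg_right hCh (show (0:ℝ) ≤ r ^ 6 * D ^ 2 by positivity)
        linarith
    _ ≤ (c * Real.sqrt c + 1) ^ 2 * (16 * Real.pi * r ^ 3 * D) ^ 2 := by
        have e1 : (16 * Real.pi * r ^ 3 * D) ^ 2 = (256 * Real.pi ^ 2) * (r ^ 6 * D ^ 2) := by
          ring
        rw [e1]
        have e2 : (2:ℝ) ≤ 256 * Real.pi ^ 2 := by
          have : (3:ℝ) ^ 2 ≤ Real.pi ^ 2 := pow_le_pow_left₀ (by norm_num) hπ.le 2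
          linarith
        have e3 : (0:ℝ) ≤ (c * Real.sqrt c + 1) ^ 2 := by positivity
        have e4 : (0:ℝ) ≤ r ^ 6 * D ^ 2 := by positivity
        nlinarith [mul_nonneg (mul_nonneg e3 e4) (show (0:ℝ) ≤ 256 * Real.pi ^ 2 - 2 by nlinarith)]

set_option maxHeartbeats 1000000 in
lemma bound_fp {B ε c x s r : ℝ} (hB : 0 < B) (hε : ε = 1 ∨ ε = -1) (hc : 0 < c)
    (hx : 0 < x) (hr : 0 < r) (hs : s = Real.sqrt (x ^ 2 + B ^ 2 / 4))
    (hA : (2 * s + ε * B) * x = c / r) :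
    B ^ ((1:ℝ)/3) * (c ^ 2 * x / (16 * Real.pi * r ^ 3 * ((2 * s + ε * B) * s + 2 * x ^ 2))) ≤
      (c ^ 2 + c + 1) * r ^ (-(8:ℝ)/3) := by
  obtain ⟨hD, -, hK2⟩ := key_ineqs hB hε hc hx hr hs hA
  obtain ⟨D, hD_def⟩ : ∃ D : ℝ, D = (2 * s + ε * B) * s + 2 * x ^ 2 := ⟨_, rfl⟩
  rw [← hD_def] at hD hK2 ⊢
  have hπ := Real.pi_gt_three
  have hrB : (0:ℝ) ≤ B ^ ((1:ℝ)/3) := Real.rpow_nonneg hB.le _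
  apply le_of_pow_le_pow_left₀ (n := 3) three_ne_zero
    (by positivity)
  have hB3 : (B ^ ((1:ℝ)/3)) ^ (3:ℕ) = B := by
    rw [← Real.rpow_natCast (B ^ ((1:ℝ)/3)) 3, ← Real.rpow_mul hB.le]
    norm_num
  have hr83 : (r ^ (-(8:ℝ)/3)) ^ (3:ℕ) = (r ^ (8:ℕ))⁻¹ := by
    rw [← Real.rpow_natCast (r ^ (-(8:ℝ)/3)) 3, ← Real.rpow_mul hr.le]
    norm_num
  rw [mul_pow, mul_pow, hB3, hr83, div_pow, mul_div_assoc', ← div_eq_mul_inv]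
  rw [div_le_div_iff₀ (by positivity) (by positivity)]
  have hCf : c ^ 5 ≤ (c ^ 2 + c + 1) ^ 3 := by nlinarith [sq_nonneg c, sq_nonneg (c-1), sq_nonneg (c+1), pow_pos hc 3, pow_pos hc 4, pow_pos hc 5, pow_pos hc 6]
  calc B * (c ^ 2 * x) ^ 3 * r ^ (8:ℕ)
      = (c ^ 5 * r ^ 8) * (B * c * x ^ 3) := by push_cast; ring
    _ ≤ (c ^ 5 * r ^ 8) * (2 * (r * D ^ 3)) :=
        mul_le_mul_of_nonneg_left hK2 (by positivity)
    _ = 2 * c ^ 5 * (r ^ 9 * D ^ 3) := by ring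
    _ ≤ 2 * (c ^ 2 + c + 1) ^ 3 * (r ^ 9 * D ^ 3) := by
        have := mul_le_mul_of_nonneg_right hCf (show (0:ℝ) ≤ r ^ 9 * D ^ 3 by positivity)
        linarith
    _ ≤ (c ^ 2 + c + 1) ^ 3 * (16 * Real.pi * r ^ 3 * D) ^ 3 := by
        have e1 : (16 * Real.pi * r ^ 3 * D) ^ 3 = (4096 * Real.pi ^ 3) * (r ^ 9 * D ^ 3) := by
          ring
        rw [e1]
        have e2 : (2:ℝ) ≤ 4096 * Real.pi ^ 3 := by
          have : (3:ℝ) ^ 3 ≤ Real.pi ^ 3 := pow_le_pow_left₀ (by norm_num) hπ.le 3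
          linarith
        have e3 : (0:ℝ) ≤ (c ^ 2 + c + 1) ^ 3 := by positivity
        have e4 : (0:ℝ) ≤ r ^ 9 * D ^ 3 := by positivity
        nlinarith [mul_nonneg (mul_nonneg e3 e4) (show (0:ℝ) ≤ 4096 * Real.pi ^ 3 - 2 by nlinarith)]


set_option maxHeartbeats 1000000 in
/-- Fix `γ > 0`.  There exist measurable functions
`f₊, f₋, h₊, h₋ : (0,∞) → [0,∞)` such that for a.e. `r > 0`:
`B^(1/3)·g_{B,+}(r) ≤ f₊(r)` and `B^(1/3)·g_{B,-}(r) ≤ f₋(r)` for all `B > 1`, and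
`g_{B,+}(r) ≤ h₊(r)` and `g_{B,-}(r) ≤ h₋(r)` for all `B ∈ (0,1)`; moreover
`∫₀¹ r²·f_±(r) dr < ∞`, `∫₁^∞ f_±(r) dr < ∞`, `∫₀¹ r²·h_±(r) dr < ∞` and
`∫₁^∞ h_±(r) dr < ∞`. -/
theorem stmt_18 (γ : ℝ) (hγ : 0 < γ)
    (x h g : ℝ → ℝ → ℝ → ℝ)
    (hx : ∀ B : ℝ, 0 < B → ∀ ε : ℝ, (ε = 1 ∨ ε = -1) → ∀ r : ℝ, r ≠ 0 →
      (2 * Real.sqrt (x B ε r ^ 2 + B ^ 2 / 4) + ε * B) * x B ε r = Real.pi / (γ * r))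
    (hh : ∀ B : ℝ, 0 < B → ∀ ε : ℝ, (ε = 1 ∨ ε = -1) → ∀ r : ℝ, r ≠ 0 →
      h B ε r = (1 / (4 * Real.pi)) *
        (if 0 < r then
          ∫ t in (0 : ℝ)..(x B ε r),
            (1 / 2 + ε * B / (4 * Real.sqrt (t ^ 2 + B ^ 2 / 4))) * t ^ 2
         else
          ∫ t in (x B ε r)..(0 : ℝ),
            (1 / 2 + ε * B / (4 * Real.sqrt (t ^ 2 + B ^ 2 / 4))) * t ^ 2))
    (hg : ∀ B : ℝ, 0 < B → ∀ ε : ℝ, (ε = 1 ∨ ε = -1) → ∀ r : ℝ, r ≠ 0 →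
      g B ε r = if 0 < r then -(deriv (h B ε) r) else deriv (h B ε) r) :
    ∃ fp fm hp hm : ℝ → ℝ,
      Measurable fp ∧ Measurable fm ∧ Measurable hp ∧ Measurable hm ∧
      (∀ r : ℝ, 0 < r → 0 ≤ fp r ∧ 0 ≤ fm r ∧ 0 ≤ hp r ∧ 0 ≤ hm r) ∧
      (∀ᵐ r ∂(volume.restrict (Set.Ioi (0 : ℝ))),
        (∀ B : ℝ, 1 < B →
          B ^ ((1 : ℝ) / 3) * g B 1 r ≤ fp r ∧ B ^ ((1 : ℝ) / 3) * g B (-1) r ≤ fm r) ∧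
        (∀ B ∈ Set.Ioo (0 : ℝ) 1, g B 1 r ≤ hp r ∧ g B (-1) r ≤ hm r)) ∧
      (∫⁻ r in Set.Ioo (0 : ℝ) 1, ENNReal.ofReal (r ^ 2 * fp r) < ⊤) ∧
      (∫⁻ r in Set.Ioo (0 : ℝ) 1, ENNReal.ofReal (r ^ 2 * fm r) < ⊤) ∧
      (∫⁻ r in Set.Ioi (1 : ℝ), ENNReal.ofReal (fp r) < ⊤) ∧
      (∫⁻ r in Set.Ioi (1 : ℝ), ENNReal.ofReal (fm r) < ⊤) ∧
      (∫⁻ r in Set.Ioo (0 : ℝ) 1, ENNReal.ofReal (r ^ 2 * hp r) < ⊤) ∧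
      (∫⁻ r in Set.Ioo (0 : ℝ) 1, ENNReal.ofReal (r ^ 2 * hm r) < ⊤) ∧
      (∫⁻ r in Set.Ioi (1 : ℝ), ENNReal.ofReal (hp r) < ⊤) ∧
      (∫⁻ r in Set.Ioi (1 : ℝ), ENNReal.ofReal (hm r) < ⊤) := by
  obtain ⟨c, hc_def⟩ : ∃ c : ℝ, c = Real.pi / γ := ⟨_, rfl⟩
  have hc : 0 < c := hc_def ▸ div_pos Real.pi_pos hγ
  -- key pointwise bounds
  have key : ∀ B : ℝ, 0 < B → ∀ ε : ℝ, (ε = 1 ∨ ε = -1) → ∀ r : ℝ, 0 < r →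
      g B ε r ≤ (c * Real.sqrt c + 1) / (r ^ 2 * Real.sqrt r) ∧
      B ^ ((1 : ℝ) / 3) * g B ε r ≤ (c ^ 2 + c + 1) * r ^ (-(8:ℝ)/3) := by
    intro B hB ε hε r hr
    have hXeq : ∀ u : ℝ, 0 < u → FB B ε (x B ε u) = c / u := by
      intro u hu
      have h1 := hx B hB ε hε u hu.ne'
      show (2 * Real.sqrt (x B ε u ^ 2 + B ^ 2 / 4) + ε * B) * x B ε u = c / u
      rw [h1, hc_def, div_div]
    have hHeq : ∀ u : ℝ, 0 < u →
        h B ε u = (1 / (4 * Real.pi)) * ∫ t in (0:ℝ)..(x B ε u), wB B ε t := by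
      intro u hu
      rw [hh B hB ε hε u hu.ne', if_pos hu]
      rfl
    obtain ⟨hxpos, hder⟩ := derivH hB hε hc (x B ε) (h B ε) hXeq hHeq r hr
    have hgval : g B ε r = c ^ 2 * x B ε r / (16 * Real.pi * r ^ 3 *
        ((2 * sB B (x B ε r) + ε * B) * sB B (x B ε r) + 2 * x B ε r ^ 2)) := by
      rw [hg B hB ε hε r hr.ne', if_pos hr, hder, neg_neg]
    have hAeq : (2 * sB B (x B ε r) + ε * B) * x B ε r = c / r := hXeq r hr
    have hsdef : sB B (x B ε r) = Real.sqrt (x B ε r ^ 2 + B ^ 2 / 4) := rfl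
    constructor
    · rw [hgval]; exact bound_hp hB hε hc hxpos hr hsdef hAeq
    · rw [hgval]; exact bound_fp hB hε hc hxpos hr hsdef hAeq
  refine ⟨fun r => (c ^ 2 + c + 1) * r ^ (-(8:ℝ)/3),
    fun r => (c ^ 2 + c + 1) * r ^ (-(8:ℝ)/3),
    fun r => (c * Real.sqrt c + 1) / (r ^ 2 * Real.sqrt r),
    fun r => (c * Real.sqrt c + 1) / (r ^ 2 * Real.sqrt r),
    (measurable_id.pow_const _).const_mul _,
    (measurable_id.pow_const _).const_mul _,
    measurable_const.div ((measurable_id.pow_const 2).mul Real.continuous_sqrt.measurable),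
    measurable_const.div ((measurable_id.pow_const 2).mul Real.continuous_sqrt.measurable),
    ?_, ?_, ?_, ?_, ?_, ?_, ?_, ?_, ?_, ?_⟩
  · -- nonneg
    intro r hr
    have h1 : 0 ≤ (c ^ 2 + c + 1) * r ^ (-(8:ℝ)/3) :=
      mul_nonneg (by positivity) (Real.rpow_nonneg hr.le _)
    have h2 : 0 ≤ (c * Real.sqrt c + 1) / (r ^ 2 * Real.sqrt r) :=
      div_nonneg (by positivity) (by positivity)
    exact ⟨h1, h1, h2, h2⟩
  · -- a.e. bounds
    rw [MeasureTheory.ae_restrict_iff' measurableSet_Ioi]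
    refine MeasureTheory.ae_of_all _ (fun r hr => ?_)
    rw [Set.mem_Ioi] at hr
    exact ⟨fun B hB1 => ⟨(key B (by linarith) 1 (Or.inl rfl) r hr).2,
        (key B (by linarith) (-1) (Or.inr rfl) r hr).2⟩,
      fun B hB => ⟨(key B hB.1 1 (Or.inl rfl) r hr).1,
        (key B hB.1 (-1) (Or.inr rfl) r hr).1⟩⟩
  · -- ∫ Ioo r^2 fp
    have hcong : ∀ r ∈ Set.Ioo (0:ℝ) 1,
        ENNReal.ofReal (r ^ 2 * ((c ^ 2 + c + 1) * r ^ (-(8:ℝ)/3))) =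
        ENNReal.ofReal ((c ^ 2 + c + 1) * r ^ (-(2:ℝ)/3)) := by
      intro r hr
      congr 1
      have e1 : (r:ℝ) ^ (2:ℕ) * ((c ^ 2 + c + 1) * r ^ (-(8:ℝ)/3)) =
          (c ^ 2 + c + 1) * (r ^ ((2:ℕ):ℝ) * r ^ (-(8:ℝ)/3)) := by
        rw [Real.rpow_natCast]; ring
      rw [e1, ← Real.rpow_add hr.1]
      norm_num
    rw [setLIntegral_congr_fun measurableSet_Ioo hcong]
    exact IntegrableOn.setLIntegral_lt_top
      (((intervalIntegral.integrableOn_Ioo_rpow_iff one_pos).2 (by norm_num)).const_mul _)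
  · -- same
    have hcong : ∀ r ∈ Set.Ioo (0:ℝ) 1,
        ENNReal.ofReal (r ^ 2 * ((c ^ 2 + c + 1) * r ^ (-(8:ℝ)/3))) =
        ENNReal.ofReal ((c ^ 2 + c + 1) * r ^ (-(2:ℝ)/3)) := by
      intro r hr
      congr 1
      have e1 : (r:ℝ) ^ (2:ℕ) * ((c ^ 2 + c + 1) * r ^ (-(8:ℝ)/3)) =
          (c ^ 2 + c + 1) * (r ^ ((2:ℕ):ℝ) * r ^ (-(8:ℝ)/3)) := by
        rw [Real.rpow_natCast]; ring
      rw [e1, ← Real.rpow_add hr.1]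
      norm_num
    rw [setLIntegral_congr_fun measurableSet_Ioo hcong]
    exact IntegrableOn.setLIntegral_lt_top
      (((intervalIntegral.integrableOn_Ioo_rpow_iff one_pos).2 (by norm_num)).const_mul _)
  · exact IntegrableOn.setLIntegral_lt_top
      ((integrableOn_Ioi_rpow_of_lt (by norm_num) one_pos).const_mul _)
  · exact IntegrableOn.setLIntegral_lt_top
      ((integrableOn_Ioi_rpow_of_lt (by norm_num) one_pos).const_mul _)
  · -- ∫ Ioo r^2 hp
    have hcong : ∀ r ∈ Set.Ioo (0:ℝ) 1,
        ENNReal.ofReal (r ^ 2 * ((c * Real.sqrt c + 1) / (r ^ 2 * Real.sqrt r))) =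
        ENNReal.ofReal ((c * Real.sqrt c + 1) * r ^ (-(1:ℝ)/2)) := by
      intro r hr
      congr 1
      have hsr : 0 < Real.sqrt r := Real.sqrt_pos.2 hr.1
      have e1 : r ^ (-(1:ℝ)/2) = (Real.sqrt r)⁻¹ := by
        rw [show -(1:ℝ)/2 = -(1/2) by norm_num, Real.rpow_neg hr.1.le, ← Real.sqrt_eq_rpow]
      have hr2 : ((r:ℝ)^2) ≠ 0 := pow_ne_zero 2 hr.1.ne'
      calc r ^ 2 * ((c * Real.sqrt c + 1) / (r ^ 2 * Real.sqrt r))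
          = (c * Real.sqrt c + 1) * (Real.sqrt r)⁻¹ * (r ^ 2 / r ^ 2) := by
            rw [div_eq_mul_inv, mul_inv]; ring
        _ = (c * Real.sqrt c + 1) * r ^ (-(1:ℝ)/2) := by
            rw [div_self hr2, mul_one, e1]
    rw [setLIntegral_congr_fun measurableSet_Ioo hcong]
    exact IntegrableOn.setLIntegral_lt_top
      (((intervalIntegral.integrableOn_Ioo_rpow_iff one_pos).2 (by norm_num)).const_mul _)
  · have hcong : ∀ r ∈ Set.Ioo (0:ℝ) 1,
        ENNReal.ofReal (r ^ 2 * ((c * Real.sqrt c + 1) / (r ^ 2 * Real.sqrt r))) =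
        ENNReal.ofReal ((c * Real.sqrt c + 1) * r ^ (-(1:ℝ)/2)) := by
      intro r hr
      congr 1
      have hsr : 0 < Real.sqrt r := Real.sqrt_pos.2 hr.1
      have e1 : r ^ (-(1:ℝ)/2) = (Real.sqrt r)⁻¹ := by
        rw [show -(1:ℝ)/2 = -(1/2) by norm_num, Real.rpow_neg hr.1.le, ← Real.sqrt_eq_rpow]
      have hr2 : ((r:ℝ)^2) ≠ 0 := pow_ne_zero 2 hr.1.ne'
      calc r ^ 2 * ((c * Real.sqrt c + 1) / (r ^ 2 * Real.sqrt r))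
          = (c * Real.sqrt c + 1) * (Real.sqrt r)⁻¹ * (r ^ 2 / r ^ 2) := by
            rw [div_eq_mul_inv, mul_inv]; ring
        _ = (c * Real.sqrt c + 1) * r ^ (-(1:ℝ)/2) := by
            rw [div_self hr2, mul_one, e1]
    rw [setLIntegral_congr_fun measurableSet_Ioo hcong]
    exact IntegrableOn.setLIntegral_lt_top
      (((intervalIntegral.integrableOn_Ioo_rpow_iff one_pos).2 (by norm_num)).const_mul _)
  · -- ∫ Ioi hp
    have hcong : ∀ r ∈ Set.Ioi (1:ℝ),
        ENNReal.ofReal ((c * Real.sqrt c + 1) / (r ^ 2 * Real.sqrt r)) =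
        ENNReal.ofReal ((c * Real.sqrt c + 1) * r ^ (-(5:ℝ)/2)) := by
      intro r hr
      rw [Set.mem_Ioi] at hr
      have hr0 : (0:ℝ) < r := lt_trans one_pos hr
      congr 1
      have h52 : r ^ ((5:ℝ)/2) = r ^ 2 * Real.sqrt r := by
        rw [show (5:ℝ)/2 = ((2:ℕ):ℝ) + 1/2 by norm_num, Real.rpow_add hr0,
          Real.rpow_natCast, ← Real.sqrt_eq_rpow]
      have e1 : r ^ (-(5:ℝ)/2) = (r ^ 2 * Real.sqrt r)⁻¹ := by
        rw [show -(5:ℝ)/2 = -(5/2) by norm_num, Real.rpow_neg hr0.le, h52]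
      rw [e1, div_eq_mul_inv]
    rw [setLIntegral_congr_fun measurableSet_Ioi hcong]
    exact IntegrableOn.setLIntegral_lt_top
      ((integrableOn_Ioi_rpow_of_lt (by norm_num) one_pos).const_mul _)
  · have hcong : ∀ r ∈ Set.Ioi (1:ℝ),
        ENNReal.ofReal ((c * Real.sqrt c + 1) / (r ^ 2 * Real.sqrt r)) =
        ENNReal.ofReal ((c * Real.sqrt c + 1) * r ^ (-(5:ℝ)/2)) := by
      intro r hr
      rw [Set.mem_Ioi] at hr
      have hr0 : (0:ℝ) < r := lt_trans one_pos hr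
      congr 1
      have h52 : r ^ ((5:ℝ)/2) = r ^ 2 * Real.sqrt r := by
        rw [show (5:ℝ)/2 = ((2:ℕ):ℝ) + 1/2 by norm_num, Real.rpow_add hr0,
          Real.rpow_natCast, ← Real.sqrt_eq_rpow]
      have e1 : r ^ (-(5:ℝ)/2) = (r ^ 2 * Real.sqrt r)⁻¹ := by
        rw [show -(5:ℝ)/2 = -(5/2) by norm_num, Real.rpow_neg hr0.le, h52]
      rw [e1, div_eq_mul_inv]
    rw [setLIntegral_congr_fun measurableSet_Ioi hcong]
    exact IntegrableOn.setLIntegral_lt_top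
      ((integrableOn_Ioi_rpow_of_lt (by norm_num) one_pos).const_mul _)
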